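/- In the top-k problem (arms ordered so μ_1 ≥ … ≥ μ_K with μ_k > μ_{k+1}), for any w in the simplex Δ_K, inf_{λ ∈ Alt_μ} Σ_{i∈[K]} w_i (μ_i - λ_i)²/(2σ²) = min_{a ≤ k, b ≥ k+1} [ w_a (μ_a - μ_{ab})²/(2σ²) + w_b (μ_b - μ_{ab})²/(2σ²) ], where μ_{ab} = (w_a μ_a + w_b μ_b)/(w_a + w_b). -/

import Mathlib

open Set Filter Topology

/-- The set of the (at most) `k` largest coordinates of `ν`: arms with fewer than `k`
arms strictly above them. -/
def topSet (K k : ℕ) (ν : Fin K → ℝ) : Set (Fin K) :=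
  {i | ({j | ν i < ν j} : Set (Fin K)).ncard < k}

/-- Alternatives for the top-`k` problem: vectors whose top-`k` set differs. -/
def AltTopK (K k : ℕ) (μ : Fin K → ℝ) : Set (Fin K → ℝ) :=
  {l | topSet K k l ≠ topSet K k μ}

lemma ncard_lt_k {K k : ℕ} (hkK : k ≤ K) : ({j : Fin K | (j : ℕ) < k}).ncard = k := by
  have h : {j : Fin K | (j : ℕ) < k} = Set.range (Fin.castLE hkK) := by
    ext j
    simp only [Set.mem_setOf_eq, Set.mem_range]
    constructor
    · intro hj; exact ⟨⟨j, hj⟩, rfl⟩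
    · rintro ⟨i, rfl⟩; exact i.2
  rw [h, ← Set.image_univ, Set.ncard_image_of_injective _ (Fin.castLE_injective _),
    Set.ncard_univ, Nat.card_eq_fintype_card, Fintype.card_fin]

lemma topSet_eq_of_sorted {K k : ℕ} (hk : 0 < k) (hkK : k < K) (μ : Fin K → ℝ)
    (hord : ∀ i j : Fin K, i ≤ j → μ j ≤ μ i)
    (hgap : μ ⟨k, hkK⟩ < μ ⟨k - 1, lt_of_le_of_lt (Nat.sub_le k 1) hkK⟩) :
    topSet K k μ = {i : Fin K | (i : ℕ) < k} := by
  ext i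
  simp only [topSet, Set.mem_setOf_eq]
  constructor
  · intro h
    by_contra hik
    push_neg at hik
    have hsub : {j : Fin K | (j : ℕ) < k} ⊆ {j | μ i < μ j} := by
      intro j hj
      simp only [Set.mem_setOf_eq] at hj
      have h1 : μ ⟨k - 1, by omega⟩ ≤ μ j := hord j ⟨k - 1, by omega⟩ (by
        simp [Fin.le_def]; omega)
      have h2 : μ i ≤ μ ⟨k, hkK⟩ := hord ⟨k, hkK⟩ i (by simp [Fin.le_def]; omega)
      exact lt_of_le_of_lt h2 (lt_of_lt_of_le hgap h1)
    have hle := Set.ncard_le_ncard hsub (Set.toFinite _)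
    rw [ncard_lt_k hkK.le] at hle
    omega
  · intro hik
    have hi : i ∈ {j : Fin K | (j : ℕ) < k} := hik
    have hsub : {j : Fin K | μ i < μ j} ⊆ {j : Fin K | (j : ℕ) < k} \ {i} := by
      intro j hj
      simp only [Set.mem_setOf_eq] at hj
      refine ⟨?_, ?_⟩
      · show (j : ℕ) < k
        by_contra hjk
        push_neg at hjk
        have h1 : μ j ≤ μ ⟨k, hkK⟩ := hord ⟨k, hkK⟩ j (by simp [Fin.le_def]; omega)
        have h2 : μ ⟨k - 1, by omega⟩ ≤ μ i := hord i ⟨k - 1, by omega⟩ (by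
          simp [Fin.le_def]; omega)
        linarith
      · simp only [Set.mem_singleton_iff]
        rintro rfl
        exact lt_irrefl _ hj
    have hle := Set.ncard_le_ncard hsub (Set.toFinite _)
    rw [Set.ncard_diff_singleton_of_mem hi, ncard_lt_k hkK.le] at hle
    omega

lemma alt_of_lt {K k : ℕ} (l : Fin K → ℝ) (a b : Fin K) (ha : (a : ℕ) < k)
    (hb : k ≤ (b : ℕ)) (hab : l a < l b) :
    topSet K k l ≠ {i : Fin K | (i : ℕ) < k} := by
  intro h
  have hA : a ∈ topSet K k l := by rw [h]; exact ha
  have hB : b ∉ topSet K k l := by rw [h]; simp only [Set.mem_setOf_eq]; omega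
  simp only [topSet, Set.mem_setOf_eq, not_lt] at hA hB
  have hsub : insert b {j : Fin K | l b < l j} ⊆ {j | l a < l j} := by
    rw [Set.insert_subset_iff]
    exact ⟨hab, fun j hj => hab.trans hj⟩
  have hnb : b ∉ {j : Fin K | l b < l j} := by simp
  have h1 : ({j : Fin K | l b < l j}).ncard + 1 ≤ ({j : Fin K | l a < l j}).ncard := by
    rw [← Set.ncard_insert_of_notMem hnb]
    exact Set.ncard_le_ncard hsub (Set.toFinite _)
  omega

lemma exists_le_pair {K k : ℕ} (hk : 0 < k) (hkK : k ≤ K) (l : Fin K → ℝ)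
    (h : topSet K k l ≠ {i : Fin K | (i : ℕ) < k}) :
    ∃ a b : Fin K, (a : ℕ) < k ∧ k ≤ (b : ℕ) ∧ l a ≤ l b := by
  by_contra hc
  push_neg at hc
  apply h
  ext i
  simp only [topSet, Set.mem_setOf_eq]
  constructor
  · intro hi
    by_contra hik
    push_neg at hik
    have hsub : {j : Fin K | (j : ℕ) < k} ⊆ {j | l i < l j} := by
      intro j hj
      exact hc j i hj hik
    have hle := Set.ncard_le_ncard hsub (Set.toFinite _)
    rw [ncard_lt_k hkK] at hle
    omega
  · intro hik
    have hi : i ∈ {j : Fin K | (j : ℕ) < k} := hik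
    have hsub : {j : Fin K | l i < l j} ⊆ {j : Fin K | (j : ℕ) < k} \ {i} := by
      intro j hj
      simp only [Set.mem_setOf_eq] at hj
      refine ⟨?_, ?_⟩
      · show (j : ℕ) < k
        by_contra hjk
        push_neg at hjk
        exact absurd hj (not_lt.2 (hc i j hik hjk).le)
      · simp only [Set.mem_singleton_iff]
        rintro rfl
        exact lt_irrefl _ hj
    have hle := Set.ncard_le_ncard hsub (Set.toFinite _)
    rw [Set.ncard_diff_singleton_of_mem hi, ncard_lt_k hkK] at hle
    omega

lemma key_ineq (wa wb ma mb x y : ℝ) (hwa : 0 ≤ wa) (hwb : 0 ≤ wb)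
    (hm : mb ≤ ma) (hxy : x ≤ y) :
    wa * (ma - (wa * ma + wb * mb) / (wa + wb)) ^ 2
      + wb * (mb - (wa * ma + wb * mb) / (wa + wb)) ^ 2
      ≤ wa * (ma - x) ^ 2 + wb * (mb - y) ^ 2 := by
  rcases eq_or_lt_of_le (add_nonneg hwa hwb) with h | h
  · have h1 : wa = 0 := by nlinarith
    have h2 : wb = 0 := by nlinarith
    simp [h1, h2]
  · have hs : wa + wb ≠ 0 := ne_of_gt h
    set m := (wa * ma + wb * mb) / (wa + wb) with hmdef
    have hid : (wa + wb) * (wa * (ma - m) ^ 2 + wb * (mb - m) ^ 2)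
        = wa * wb * (ma - mb) ^ 2 := by
      rw [hmdef]
      field_simp
      ring
    have hmain : wa * wb * (ma - mb) ^ 2
        ≤ (wa + wb) * (wa * (ma - x) ^ 2 + wb * (mb - y) ^ 2) := by
      nlinarith [sq_nonneg (wa * (ma - x) + wb * (mb - y)),
        mul_nonneg (mul_nonneg hwa hwb)
          (mul_nonneg (sub_nonneg.2 hxy) (by nlinarith : (0:ℝ) ≤ (ma - x) - (mb - y) + (ma - mb))),
        mul_nonneg hwa hwb, sq_nonneg (ma - mb)]
    nlinarith [hid, hmain, h]

theorem stmt_10 (K k : ℕ) (σ2 : ℝ) (hσ2 : 0 < σ2) (hk : 0 < k) (hkK : k < K)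
    (μ : Fin K → ℝ) (hord : ∀ i j : Fin K, i ≤ j → μ j ≤ μ i)
    (hgap : μ ⟨k, hkK⟩ < μ ⟨k - 1, by omega⟩)
    (w : Fin K → ℝ) (hw : w ∈ stdSimplex ℝ (Fin K)) :
    sInf {y | ∃ l ∈ AltTopK K k μ, y = ∑ i, w i * (μ i - l i) ^ 2 / (2 * σ2)} =
      sInf {y | ∃ a b : Fin K, (a : ℕ) < k ∧ k ≤ (b : ℕ) ∧
        y = w a * (μ a - (w a * μ a + w b * μ b) / (w a + w b)) ^ 2 / (2 * σ2)
          + w b * (μ b - (w a * μ a + w b * μ b) / (w a + w b)) ^ 2 / (2 * σ2)} := by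
  have hw0 : ∀ i, 0 ≤ w i := fun i => hw.1 i
  have h2σ : (0 : ℝ) < 2 * σ2 := by linarith
  have htop : topSet K k μ = {i : Fin K | (i : ℕ) < k} :=
    topSet_eq_of_sorted hk hkK μ hord hgap
  set m : Fin K → Fin K → ℝ := fun a b => (w a * μ a + w b * μ b) / (w a + w b) with hm
  set S1 := {y | ∃ l ∈ AltTopK K k μ, y = ∑ i, w i * (μ i - l i) ^ 2 / (2 * σ2)} with hS1
  set S2 := {y | ∃ a b : Fin K, (a : ℕ) < k ∧ k ≤ (b : ℕ) ∧
        y = w a * (μ a - (w a * μ a + w b * μ b) / (w a + w b)) ^ 2 / (2 * σ2)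
          + w b * (μ b - (w a * μ a + w b * μ b) / (w a + w b)) ^ 2 / (2 * σ2)} with hS2
  have hbdd1 : BddBelow S1 := by
    refine ⟨0, ?_⟩
    rintro y ⟨l, -, rfl⟩
    exact Finset.sum_nonneg fun i _ =>
      div_nonneg (mul_nonneg (hw0 i) (sq_nonneg _)) h2σ.le
  have hbdd2 : BddBelow S2 := by
    refine ⟨0, ?_⟩
    rintro y ⟨a, b, -, -, rfl⟩
    exact add_nonneg (div_nonneg (mul_nonneg (hw0 a) (sq_nonneg _)) h2σ.le)
      (div_nonneg (mul_nonneg (hw0 b) (sq_nonneg _)) h2σ.le)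
  -- membership gadget
  have hmem : ∀ (a b : Fin K), (a : ℕ) < k → k ≤ (b : ℕ) → ∀ δ : ℝ, 0 < δ →
      (w a * (μ a - m a b) ^ 2 / (2 * σ2)
        + w b * (μ b - (m a b + δ)) ^ 2 / (2 * σ2)) ∈ S1 := by
    intro a b ha hb δ hδ
    have hne : a ≠ b := by intro h; rw [h] at ha; omega
    set l : Fin K → ℝ := Function.update (Function.update μ a (m a b)) b (m a b + δ) with hl
    have hla : l a = m a b := by
      rw [hl, Function.update_of_ne hne, Function.update_self]
    have hlb : l b = m a b + δ := by rw [hl, Function.update_self]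
    have hlother : ∀ i, i ≠ a → i ≠ b → l i = μ i := by
      intro i hia hib
      rw [hl, Function.update_of_ne hib, Function.update_of_ne hia]
    refine ⟨l, ?_, ?_⟩
    · show topSet K k l ≠ topSet K k μ
      rw [htop]
      exact alt_of_lt l a b ha hb (by rw [hla, hlb]; linarith)
    · have hz : ∀ i ∈ Finset.univ, i ∉ ({a, b} : Finset (Fin K)) →
          w i * (μ i - l i) ^ 2 / (2 * σ2) = 0 := by
        intro i _ hi
        simp only [Finset.mem_insert, Finset.mem_singleton, not_or] at hi
        rw [hlother i hi.1 hi.2]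
        simp
      have hsum := Finset.sum_subset (Finset.subset_univ ({a, b} : Finset (Fin K))) hz
      rw [← hsum, Finset.sum_pair hne, hla, hlb]
  apply le_antisymm
  · -- sInf S1 ≤ sInf S2
    have hS2ne : S2.Nonempty := by
      refine ⟨_, ⟨⟨0, by omega⟩, ⟨k, hkK⟩, by simp [hk], by simp, rfl⟩⟩
    refine le_csInf hS2ne ?_
    rintro y ⟨a, b, ha, hb, rfl⟩
    have hf : Tendsto (fun δ : ℝ => w a * (μ a - m a b) ^ 2 / (2 * σ2)
        + w b * (μ b - (m a b + δ)) ^ 2 / (2 * σ2)) (𝓝[>] 0)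
        (𝓝 (w a * (μ a - m a b) ^ 2 / (2 * σ2)
          + w b * (μ b - m a b) ^ 2 / (2 * σ2))) := by
      apply Filter.Tendsto.mono_left _ nhdsWithin_le_nhds
      exact Continuous.tendsto' (by fun_prop) 0 _ (by norm_num)
    have hev : ∀ᶠ δ in 𝓝[>] (0 : ℝ), sInf S1 ≤ w a * (μ a - m a b) ^ 2 / (2 * σ2)
        + w b * (μ b - (m a b + δ)) ^ 2 / (2 * σ2) := by
      filter_upwards [self_mem_nhdsWithin] with δ hδ
      exact csInf_le hbdd1 (hmem a b ha hb δ hδ)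
    exact ge_of_tendsto hf hev
  · -- sInf S2 ≤ sInf S1
    have hS1ne : S1.Nonempty :=
      ⟨_, hmem ⟨0, by omega⟩ ⟨k, hkK⟩ (by simp [hk]) (by simp) 1 one_pos⟩
    refine le_csInf hS1ne ?_
    rintro y ⟨l, hl, rfl⟩
    have hl' : topSet K k l ≠ {i : Fin K | (i : ℕ) < k} := by
      rw [← htop]; exact hl
    obtain ⟨a, b, ha, hb, hab⟩ := exists_le_pair hk hkK.le l hl'
    have hne : a ≠ b := by intro h; rw [h] at ha; omega
    have hba : μ b ≤ μ a := hord a b (by rw [Fin.le_def]; omega)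
    have hkey := key_ineq (w a) (w b) (μ a) (μ b) (l a) (l b) (hw0 a) (hw0 b) hba hab
    calc sInf S2 ≤ w a * (μ a - m a b) ^ 2 / (2 * σ2)
          + w b * (μ b - m a b) ^ 2 / (2 * σ2) := csInf_le hbdd2 ⟨a, b, ha, hb, rfl⟩
      _ ≤ w a * (μ a - l a) ^ 2 / (2 * σ2) + w b * (μ b - l b) ^ 2 / (2 * σ2) := by
          rw [← add_div, ← add_div]
          exact div_le_div_of_nonneg_right hkey h2σ.le
      _ = ∑ i ∈ ({a, b} : Finset (Fin K)), w i * (μ i - l i) ^ 2 / (2 * σ2) := by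
          rw [Finset.sum_pair hne]
      _ ≤ ∑ i, w i * (μ i - l i) ^ 2 / (2 * σ2) :=
          Finset.sum_le_sum_of_subset_of_nonneg (Finset.subset_univ _)
            (fun i _ _ => div_nonneg (mul_nonneg (hw0 i) (sq_nonneg _)) h2σ.le)
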